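/- Let E be a real Banach space and let (A, η) be a free Banach f-algebra over E. Let Z be the closed sublattice of A generated by η(E) (the closure of the smallest linear subspace containing η(E) closed under binary suprema). Then: (i) (Z, η) is the free Banach lattice over E, i.e., for every Banach lattice X and every bounded linear operator T : E → X there exists a unique lattice homomorphism T̂ : Z → X with T̂ ∘ η = T and ‖T̂‖ = ‖T‖; and (ii) there exists a lattice homomorphism P : A → A with ‖P‖ ≤ 1 satisfying P ∘ P = P, range of P equal to Z, and P(η(x)) = η(x) for all x ∈ E, so that Z is contractively complemented in A by a lattice homomorphic projection. -/

import Mathlib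

/-- A bundled Banach f-algebra. -/
structure BanachFAlg : Type 1 where
  carrier : Type
  [grp : NormedAddCommGroup carrier]
  [lat : Lattice carrier]
  [ord : IsOrderedAddMonoid carrier]
  [solid : HasSolidNorm carrier]
  [mod : NormedSpace ℝ carrier]
  [compl : CompleteSpace carrier]
  mul : carrier → carrier → carrier
  mul_assoc' : ∀ a b c, mul (mul a b) c = mul a (mul b c)
  add_mul' : ∀ a b c, mul (a + b) c = mul a c + mul b c
  mul_add' : ∀ a b c, mul a (b + c) = mul a b + mul a c
  smul_mul' : ∀ (r : ℝ) (a b), mul (r • a) b = r • mul a b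
  mul_smul' : ∀ (r : ℝ) (a b), mul a (r • b) = r • mul a b
  mul_nonneg' : ∀ a b, 0 ≤ a → 0 ≤ b → 0 ≤ mul a b
  inf_mul_left' : ∀ a b c, a ⊓ b = 0 → 0 ≤ c → mul c a ⊓ b = 0
  inf_mul_right' : ∀ a b c, a ⊓ b = 0 → 0 ≤ c → mul a c ⊓ b = 0
  norm_mul_le' : ∀ a b, ‖mul a b‖ ≤ ‖a‖ * ‖b‖

attribute [instance] BanachFAlg.grp BanachFAlg.lat BanachFAlg.ord BanachFAlg.solid BanachFAlg.mod BanachFAlg.compl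

/-- Lattice-algebra homomorphism between bundled Banach f-algebras. -/
def IsLatAlgHom (A B : BanachFAlg) (T : A.carrier →L[ℝ] B.carrier) : Prop :=
  (∀ a b, T (A.mul a b) = B.mul (T a) (T b)) ∧ (∀ a b, T (a ⊔ b) = T a ⊔ T b)

/-- `(A, η)` is a free Banach f-algebra over `E`. -/
def IsFreeBanachFAlg (E : Type) [NormedAddCommGroup E] [NormedSpace ℝ E]
    (A : BanachFAlg) (η : E →ₗᵢ[ℝ] A.carrier) : Prop :=
  ∀ (B : BanachFAlg) (T : E →L[ℝ] B.carrier), ‖T‖ ≤ 1 →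
    ∃! That : A.carrier →L[ℝ] B.carrier,
      IsLatAlgHom A B That ∧ (∀ x, That (η x) = T x) ∧ ‖That‖ = ‖T‖

/-- A bundled Banach lattice. -/
structure BanachLat : Type 1 where
  carrier : Type
  [grp : NormedAddCommGroup carrier]
  [lat : Lattice carrier]
  [ord : IsOrderedAddMonoid carrier]
  [solid : HasSolidNorm carrier]
  [mod : NormedSpace ℝ carrier]
  [compl : CompleteSpace carrier]

attribute [instance] BanachLat.grp BanachLat.lat BanachLat.ord BanachLat.solid BanachLat.mod BanachLat.compl

/-- The smallest linear subspace of `M` containing `s` that is closed under binary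
suprema. -/
def latticeHull {M : Type} [NormedAddCommGroup M] [Lattice M] [IsOrderedAddMonoid M]
    [HasSolidNorm M] [NormedSpace ℝ M]
    (s : Set M) : Submodule ℝ M :=
  sInf {p : Submodule ℝ M | s ⊆ ↑p ∧ ∀ x y : M, x ∈ p → y ∈ p → x ⊔ y ∈ p}

section smul
open Filter
variable {M : Type} [NormedAddCommGroup M] [Lattice M] [IsOrderedAddMonoid M]
    [HasSolidNorm M] [NormedSpace ℝ M]

lemma nonneg_of_add_self {a : M} (h : 0 ≤ a + a) : 0 ≤ a := by
  have h1 : -a ≤ a := by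
    rw [neg_le_iff_add_nonneg]; exact h
  have h2 : a⁻ ≤ a⁺ := by
    have := posPart_mono h1
    simpa [posPart_neg] using this
  have h3 : a⁻ = 0 :=
    le_antisymm (by simpa [inf_eq_right.mpr h2] using (posPart_inf_negPart_eq_zero a).le)
      (negPart_nonneg a)
  exact negPart_eq_zero.mp h3

lemma nonneg_of_two_pow_smul {n : ℕ} {a : M} (h : 0 ≤ ((2:ℝ)^n) • a) : 0 ≤ a := by
  induction n generalizing a with
  | zero => simpa using h
  | succ n ih =>
    have : 0 ≤ (2:ℝ)^n • (a + a) := by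
      have : (2:ℝ)^(n+1) • a = (2:ℝ)^n • (a + a) := by
        rw [← two_smul ℝ a, smul_smul]; ring_nf
      rwa [this] at h
    exact nonneg_of_add_self (ih this)

lemma real_smul_nonneg {r : ℝ} (hr : 0 ≤ r) {a : M} (ha : 0 ≤ a) : 0 ≤ r • a := by
  have key : ∀ n : ℕ, 0 ≤ ((⌊r * 2^n⌋₊ : ℝ) / 2^n) • a := by
    intro n
    have h2 : (0:ℝ) < 2^n := by positivity
    have hbpos : 0 ≤ ((2:ℝ)^n)⁻¹ • a := by
      apply nonneg_of_two_pow_smul (n := n)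
      rw [smul_smul, mul_inv_cancel₀ (ne_of_gt h2), one_smul]; exact ha
    have heq : ((⌊r * 2^n⌋₊ : ℝ) / 2^n) • a = (⌊r * 2^n⌋₊ : ℕ) • (((2:ℝ)^n)⁻¹ • a) := by
      rw [← Nat.cast_smul_eq_nsmul ℝ, smul_smul, div_eq_mul_inv]
    rw [heq]
    exact nsmul_nonneg hbpos _
  have h1 : Tendsto (fun x : ℝ => (⌊r * x⌋₊ : ℝ) / x) atTop (nhds r) :=
    tendsto_nat_floor_mul_div_atTop hr
  have h2 : Tendsto (fun n : ℕ => (2:ℝ)^n) atTop atTop :=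
    tendsto_pow_atTop_atTop_of_one_lt one_lt_two
  have hconv : Tendsto (fun n : ℕ => ((⌊r * 2^n⌋₊ : ℝ) / 2^n) • a) atTop (nhds (r • a)) :=
    ((h1.comp h2).smul_const a)
  exact ge_of_tendsto hconv (Eventually.of_forall key)

lemma real_smul_mono {r : ℝ} (hr : 0 ≤ r) {a b : M} (hab : a ≤ b) : r • a ≤ r • b := by
  have := real_smul_nonneg hr (sub_nonneg.mpr hab)
  rwa [smul_sub, sub_nonneg] at this

lemma real_smul_sup {r : ℝ} (hr : 0 < r) (a b : M) : r • (a ⊔ b) = r • a ⊔ r • b := by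
  apply le_antisymm
  · have h1 : a ⊔ b ≤ r⁻¹ • (r • a ⊔ r • b) := by
      apply sup_le
      · have := real_smul_mono (le_of_lt (inv_pos.mpr hr)) (le_sup_left : r • a ≤ r • a ⊔ r • b)
        rwa [smul_smul, inv_mul_cancel₀ hr.ne', one_smul] at this
      · have := real_smul_mono (le_of_lt (inv_pos.mpr hr)) (le_sup_right : r • b ≤ r • a ⊔ r • b)
        rwa [smul_smul, inv_mul_cancel₀ hr.ne', one_smul] at this
    have := real_smul_mono hr.le h1
    rwa [smul_smul, mul_inv_cancel₀ hr.ne', one_smul] at this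
  · exact sup_le (real_smul_mono hr.le le_sup_left) (real_smul_mono hr.le le_sup_right)
end smul

section constructions

/-- Zero-multiplication Banach f-algebra on a normed lattice group. -/
noncomputable def zeroFAlg (X : Type) [NormedAddCommGroup X] [Lattice X] [IsOrderedAddMonoid X]
    [HasSolidNorm X] [NormedSpace ℝ X]
    [CompleteSpace X] : BanachFAlg where
  carrier := X
  mul _ _ := 0
  mul_assoc' _ _ _ := rfl
  add_mul' _ _ _ := by simp
  mul_add' _ _ _ := by simp
  smul_mul' _ _ _ := by simp
  mul_smul' _ _ _ := by simp
  mul_nonneg' _ _ _ _ := le_refl 0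
  inf_mul_left' a b c h _ := by
    have hb : 0 ≤ b := h ▸ inf_le_right
    simpa using inf_eq_left.mpr hb
  inf_mul_right' a b c h _ := by
    have hb : 0 ≤ b := h ▸ inf_le_right
    simpa using inf_eq_left.mpr hb
  norm_mul_le' a b := by
    simpa using mul_nonneg (norm_nonneg a) (norm_nonneg b)

/-- Closed sub-f-algebra as a bundled Banach f-algebra. -/
noncomputable def subFAlg (A : BanachFAlg) (D : Submodule ℝ A.carrier)
    (hcl : IsClosed (D : Set A.carrier))
    (hsup : ∀ x y : A.carrier, x ∈ D → y ∈ D → x ⊔ y ∈ D)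
    (hmul : ∀ x y : A.carrier, x ∈ D → y ∈ D → A.mul x y ∈ D) : BanachFAlg := by
  have hneg : ∀ x : A.carrier, x ∈ D → -x ∈ D := fun x hx => D.neg_mem hx
  have hinf : ∀ x y : A.carrier, x ∈ D → y ∈ D → x ⊓ y ∈ D := by
    intro x y hx hy
    have : x ⊓ y = x + y - x ⊔ y := by
      rw [eq_sub_iff_add_eq, inf_add_sup]
    rw [this]
    exact D.sub_mem (D.add_mem hx hy) (hsup x y hx hy)
  letI latt : Lattice ↥D :=
    { (inferInstance : PartialOrder ↥D) with
      sup := fun a b => ⟨↑a ⊔ ↑b, hsup _ _ a.2 b.2⟩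
      inf := fun a b => ⟨↑a ⊓ ↑b, hinf _ _ a.2 b.2⟩
      le_sup_left := fun a b => (le_sup_left : (a:A.carrier) ≤ ↑a ⊔ ↑b)
      le_sup_right := fun a b => (le_sup_right : (b:A.carrier) ≤ ↑a ⊔ ↑b)
      sup_le := fun a b c h1 h2 => (sup_le h1 h2 : (↑a ⊔ ↑b : A.carrier) ≤ ↑c)
      inf_le_left := fun a b => (inf_le_left : (↑a ⊓ ↑b : A.carrier) ≤ ↑a)
      inf_le_right := fun a b => (inf_le_right : (↑a ⊓ ↑b : A.carrier) ≤ ↑b)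
      le_inf := fun a b c h1 h2 => (le_inf h1 h2 : (a:A.carrier) ≤ ↑b ⊓ ↑c) }
  letI : HasSolidNorm ↥D := ⟨by
        intro x y h
        have h' : |(x : A.carrier)| ≤ |(y : A.carrier)| := h
        exact HasSolidNorm.solid (α := A.carrier) h'⟩
  letI : IsOrderedAddMonoid ↥D :=
    { add_le_add_left := by
        intro a b h c
        exact add_le_add_left (show (a:A.carrier) ≤ (b:A.carrier) from h) (c : A.carrier) }
  letI : CompleteSpace ↥D := hcl.completeSpace_coe
  exact
  { carrier := ↥D
    mul := fun a b => ⟨A.mul ↑a ↑b, hmul _ _ a.2 b.2⟩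
    mul_assoc' := fun a b c => Subtype.ext (A.mul_assoc' _ _ _)
    add_mul' := fun a b c => Subtype.ext (A.add_mul' _ _ _)
    mul_add' := fun a b c => Subtype.ext (A.mul_add' _ _ _)
    smul_mul' := fun r a b => Subtype.ext (A.smul_mul' r _ _)
    mul_smul' := fun r a b => Subtype.ext (A.mul_smul' r _ _)
    mul_nonneg' := fun a b ha hb => A.mul_nonneg' _ _ ha hb
    inf_mul_left' := fun a b c h hc => Subtype.ext (A.inf_mul_left' _ _ _ (congrArg Subtype.val h) hc)
    inf_mul_right' := fun a b c h hc => Subtype.ext (A.inf_mul_right' _ _ _ (congrArg Subtype.val h) hc)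
    norm_mul_le' := fun a b => A.norm_mul_le' _ _ }

end constructions

section hull
variable {M : Type} [NormedAddCommGroup M] [Lattice M] [IsOrderedAddMonoid M]
    [HasSolidNorm M] [NormedSpace ℝ M]

lemma subset_latticeHull (s : Set M) : s ⊆ ↑(latticeHull s) := fun _ hx =>
  Submodule.mem_sInf.mpr fun _ hp => hp.1 hx

lemma latticeHull_sup_mem {s : Set M} {x y : M} (hx : x ∈ latticeHull s)
    (hy : y ∈ latticeHull s) : x ⊔ y ∈ latticeHull s :=
  Submodule.mem_sInf.mpr fun p hp =>
    hp.2 x y (Submodule.mem_sInf.mp hx p hp) (Submodule.mem_sInf.mp hy p hp)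

lemma latticeHull_le {s : Set M} {p : Submodule ℝ M} (h1 : s ⊆ ↑p)
    (h2 : ∀ x y : M, x ∈ p → y ∈ p → x ⊔ y ∈ p) : latticeHull s ≤ p :=
  sInf_le ⟨h1, h2⟩
end hull

lemma opNorm_eq_of_norm_eq {E F G : Type} [NormedAddCommGroup E] [NormedSpace ℝ E]
    [NormedAddCommGroup F] [NormedSpace ℝ F] [NormedAddCommGroup G] [NormedSpace ℝ G]
    (f : E →L[ℝ] F) (g : E →L[ℝ] G) (h : ∀ x, ‖f x‖ = ‖g x‖) : ‖f‖ = ‖g‖ :=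
  le_antisymm
    (f.opNorm_le_bound (norm_nonneg g) fun x => by rw [h x]; exact g.le_opNorm x)
    (g.opNorm_le_bound (norm_nonneg f) fun x => by rw [← h x]; exact f.le_opNorm x)

lemma subFAlg_full (E : Type) [NormedAddCommGroup E] [NormedSpace ℝ E]
    (A : BanachFAlg) (η : E →ₗᵢ[ℝ] A.carrier) (hfree : IsFreeBanachFAlg E A η)
    (hE : ∃ x : E, x ≠ 0)
    (D : Submodule ℝ A.carrier) (hcl : IsClosed (D : Set A.carrier))
    (hsup : ∀ x y : A.carrier, x ∈ D → y ∈ D → x ⊔ y ∈ D)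
    (hmul : ∀ x y : A.carrier, x ∈ D → y ∈ D → A.mul x y ∈ D)
    (hη : ∀ x : E, η x ∈ D) : ∀ a : A.carrier, a ∈ D := by
  obtain ⟨x₀, hx₀⟩ := hE
  haveI : Nontrivial E := nontrivial_of_ne x₀ 0 hx₀
  haveI : Nontrivial A.carrier :=
    nontrivial_of_ne (η x₀) 0 (fun h => hx₀ (η.injective (by simpa using h)))
  set ηL := η.toContinuousLinearMap with hηLdef
  have hηL : ‖ηL‖ = 1 := η.norm_toContinuousLinearMap
  have hηLx : ∀ x, ηL x = η x := fun _ => rfl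
  set B := subFAlg A D hcl hsup hmul with hB
  let T' : E →L[ℝ] B.carrier := ηL.codRestrict D hη
  have hT'norm : ‖T'‖ = 1 := by
    rw [← hηL]; exact opNorm_eq_of_norm_eq T' ηL fun x => rfl
  obtain ⟨S, ⟨hSlat, hSη, hSnorm⟩, _⟩ := hfree B T' hT'norm.le
  let F : A.carrier →L[ℝ] A.carrier := D.subtypeL.comp S
  have hF1 : IsLatAlgHom A A F := by
    constructor
    · intro a b
      show D.subtypeL (S (A.mul a b)) = A.mul (D.subtypeL (S a)) (D.subtypeL (S b))
      rw [hSlat.1]; rfl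
    · intro a b
      show D.subtypeL (S (a ⊔ b)) = D.subtypeL (S a) ⊔ D.subtypeL (S b)
      rw [hSlat.2]; rfl
  have hF2 : ∀ x, F (η x) = ηL x := by
    intro x
    show D.subtypeL (S (η x)) = ηL x
    rw [hSη x]; rfl
  have hF3 : ‖F‖ = ‖ηL‖ := by
    have h1 : ‖F‖ = ‖S‖ := opNorm_eq_of_norm_eq F S fun a => rfl
    rw [h1, hSnorm, hT'norm, hηL]
  obtain ⟨G, _, hGuniq⟩ := hfree A ηL hηL.le
  have e1 : F = G := hGuniq F ⟨hF1, hF2, hF3⟩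
  have e2 : ContinuousLinearMap.id ℝ A.carrier = G :=
    hGuniq _ ⟨⟨fun _ _ => rfl, fun _ _ => rfl⟩, fun _ => rfl,
      (ContinuousLinearMap.norm_id).trans hηL.symm⟩
  intro a
  have : F a = a := by rw [e1, ← e2]; rfl
  rw [← this]
  show D.subtypeL (S a) ∈ D
  exact (S a).2

section main

set_option maxHeartbeats 1000000 in
set_option synthInstance.maxHeartbeats 1000000 in
theorem stmt2 (E : Type) [NormedAddCommGroup E] [NormedSpace ℝ E] [CompleteSpace E]
    (A : BanachFAlg) (η : E →ₗᵢ[ℝ] A.carrier) (hfree : IsFreeBanachFAlg E A η)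
    (Z : Submodule ℝ A.carrier)
    (hZ : Z = (latticeHull (Set.range η)).topologicalClosure) :
    -- (i) `(Z, η)` is the free Banach lattice over `E`
    (∀ (X : BanachLat) (T : E →L[ℝ] X.carrier),
      ∃! That : ↥Z →L[ℝ] X.carrier,
        (∀ (f g : ↥Z) (h : (↑f ⊔ ↑g : A.carrier) ∈ Z),
            That ⟨(↑f ⊔ ↑g : A.carrier), h⟩ = That f ⊔ That g) ∧
        (∀ (x : E) (hx : η x ∈ Z), That ⟨η x, hx⟩ = T x) ∧
        ‖That‖ = ‖T‖) ∧
    -- (ii) `Z` is contractively complemented in `A` by a lattice homomorphic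
    -- projection
    (∃ P : A.carrier →L[ℝ] A.carrier,
      (∀ a b : A.carrier, P (a ⊔ b) = P a ⊔ P b) ∧
      ‖P‖ ≤ 1 ∧
      (∀ a, P (P a) = P a) ∧
      Set.range P = (Z : Set A.carrier) ∧
      (∀ x : E, P (η x) = η x)) := by
  set L := latticeHull (Set.range ⇑η) with hLdef
  have hZclosed : IsClosed (Z : Set A.carrier) := by
    rw [hZ]; exact Submodule.isClosed_topologicalClosure L
  have hLZ : L ≤ Z := by rw [hZ]; exact Submodule.le_topologicalClosure L
  have hZcoe : (Z : Set A.carrier) = closure (L : Set A.carrier) := by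
    rw [hZ, Submodule.topologicalClosure_coe]
  have hZsup : ∀ a b : A.carrier, a ∈ Z → b ∈ Z → a ⊔ b ∈ Z := by
    intro a b ha hb
    have ha' : a ∈ closure (L : Set A.carrier) := by rw [← hZcoe]; exact ha
    have hb' : b ∈ closure (L : Set A.carrier) := by rw [← hZcoe]; exact hb
    have : a ⊔ b ∈ closure (L : Set A.carrier) := by
      refine map_mem_closure₂ continuous_sup ha' hb' ?_
      intro u hu v hv
      exact latticeHull_sup_mem hu hv
    rw [← hZcoe] at this; exact this
  have hηZ : ∀ x : E, η x ∈ Z := fun x => hLZ (subset_latticeHull _ ⟨x, rfl⟩)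
  by_cases hE : ∀ x : E, x = 0
  · -- degenerate case : E = 0
    have hηx : ∀ x : E, η x = 0 := fun x => by rw [hE x]; exact map_zero η
    have hLbot : L = ⊥ := by
      refine le_antisymm (latticeHull_le ?_ ?_) bot_le
      · rintro _ ⟨x, rfl⟩
        simp [hηx x]
      · intro x y hx hy
        rw [Submodule.mem_bot] at hx hy ⊢
        rw [hx, hy, sup_idem]
    have hZset : (Z : Set A.carrier) = {0} := by
      rw [hZcoe, hLbot, Submodule.bot_coe, closure_singleton]
    constructor
    · intro X T
      have hT0 : T = 0 := by
        ext x; rw [hE x, map_zero]; rfl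
      have hTn : ‖T‖ = 0 := by rw [hT0, norm_zero]
      refine ⟨0, ⟨?_, ?_, ?_⟩, ?_⟩
      · intro f g h; simp
      · intro x hx; rw [hT0]; rfl
      · rw [hTn]; exact ContinuousLinearMap.opNorm_zero
      · rintro y ⟨-, -, hy⟩
        rw [hTn] at hy
        exact (ContinuousLinearMap.opNorm_zero_iff y).mp hy
    · refine ⟨0, ?_, ?_, ?_, ?_, ?_⟩
      · intro a b; simp
      · simp
      · intro a; simp
      · rw [hZset]
        ext a
        simp [eq_comm]
      · intro x; simp [hηx x]
  · -- main case : E ≠ 0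
    push_neg at hE
    obtain ⟨x₀, hx₀⟩ := hE
    haveI : Nontrivial E := nontrivial_of_ne x₀ 0 hx₀
    set ηL := η.toContinuousLinearMap with hηLdef
    have hηL : ‖ηL‖ = 1 := η.norm_toContinuousLinearMap
    -- Construct the projection P via the zero-multiplication f-algebra on A.carrier
    obtain ⟨P₀, ⟨hPlat, hPη, hPnorm⟩, -⟩ := hfree (zeroFAlg A.carrier) ηL hηL.le
    let P : A.carrier →L[ℝ] A.carrier := P₀
    have hPsup : ∀ a b : A.carrier, P (a ⊔ b) = P a ⊔ P b := by
      intro a b; exact hPlat.2 a b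
    have hPmul : ∀ a b : A.carrier, P (A.mul a b) = 0 := by
      intro a b
      have := hPlat.1 a b
      exact this
    have hPη' : ∀ x : E, P (η x) = η x := fun x => hPη x
    have hPnorm' : ‖P‖ = ‖ηL‖ := hPnorm
    -- P maps everything into Z
    have hrange : ∀ a : A.carrier, P a ∈ Z := by
      set D : Submodule ℝ A.carrier := Z.comap P.toLinearMap with hD
      have hcl : IsClosed (D : Set A.carrier) := by
        have : (D : Set A.carrier) = ⇑P ⁻¹' (Z : Set A.carrier) := rfl
        rw [this]; exact hZclosed.preimage P.continuous
      intro a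
      have full : ∀ a : A.carrier, a ∈ D := ?_
      · exact Submodule.mem_comap.mp (full a)
      refine subFAlg_full E A η hfree ⟨x₀, hx₀⟩ D hcl ?_ ?_ ?_
      · intro a b ha hb
        have : P (a ⊔ b) ∈ Z := by rw [hPsup]; exact hZsup _ _ ha hb
        exact this
      · intro a b _ _
        have : P (A.mul a b) ∈ Z := by rw [hPmul]; exact Z.zero_mem
        exact this
      · intro x
        have : P (η x) ∈ Z := by rw [hPη' x]; exact hηZ x
        exact this
    -- P fixes Z pointwise
    have hfix : ∀ a : A.carrier, a ∈ Z → P a = a := by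
      set W : Submodule ℝ A.carrier :=
        LinearMap.eqLocus P.toLinearMap LinearMap.id with hW
      have hWmem : ∀ a : A.carrier, a ∈ W ↔ P a = a := fun a => Iff.rfl
      have hWclosed : IsClosed (W : Set A.carrier) := by
        have : (W : Set A.carrier) = {a | P a = a} := rfl
        rw [this]
        exact isClosed_eq P.continuous continuous_id
      have hLW : L ≤ W := by
        refine latticeHull_le ?_ ?_
        · rintro _ ⟨x, rfl⟩
          exact hPη' x
        · intro a b ha hb
          have : P (a ⊔ b) = a ⊔ b := by
            rw [hPsup, (hWmem a).mp ha, (hWmem b).mp hb]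
          exact this
      have hZW : Z ≤ W := by
        rw [hZ]
        exact Submodule.topologicalClosure_minimal L hLW hWclosed
      exact fun a ha => hZW ha
    constructor
    · -- part (i)
      intro X T
      -- uniqueness of lattice homomorphisms through η
      have key : ∀ y₁ y₂ : ↥Z →L[ℝ] X.carrier,
          (∀ (f g : ↥Z) (h : (↑f ⊔ ↑g : A.carrier) ∈ Z),
            y₁ ⟨(↑f ⊔ ↑g : A.carrier), h⟩ = y₁ f ⊔ y₁ g) →
          (∀ (f g : ↥Z) (h : (↑f ⊔ ↑g : A.carrier) ∈ Z),
            y₂ ⟨(↑f ⊔ ↑g : A.carrier), h⟩ = y₂ f ⊔ y₂ g) →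
          (∀ (x : E) (hx : η x ∈ Z), y₁ ⟨η x, hx⟩ = y₂ ⟨η x, hx⟩) → y₁ = y₂ := by
        intro y₁ y₂ h1 h2 hagr
        let W : Submodule ℝ A.carrier :=
          { carrier := {a | ∃ h : a ∈ Z, y₁ ⟨a, h⟩ = y₂ ⟨a, h⟩}
            add_mem' := by
              rintro a b ⟨ha, ea⟩ ⟨hb, eb⟩
              refine ⟨Z.add_mem ha hb, ?_⟩
              have : (⟨a + b, Z.add_mem ha hb⟩ : ↥Z) = ⟨a, ha⟩ + ⟨b, hb⟩ := rfl
              rw [this, map_add, map_add, ea, eb]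
            zero_mem' := by
              refine ⟨Z.zero_mem, ?_⟩
              have : (⟨(0 : A.carrier), Z.zero_mem⟩ : ↥Z) = 0 := rfl
              rw [this, map_zero, map_zero]
            smul_mem' := by
              rintro c a ⟨ha, ea⟩
              refine ⟨Z.smul_mem c ha, ?_⟩
              have : (⟨c • a, Z.smul_mem c ha⟩ : ↥Z) = c • ⟨a, ha⟩ := rfl
              rw [this, map_smul, map_smul, ea] }
        have hLW : L ≤ W := by
          refine latticeHull_le ?_ ?_
          · rintro _ ⟨x, rfl⟩
            exact ⟨hηZ x, hagr x (hηZ x)⟩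
          · rintro a b ⟨ha, ea⟩ ⟨hb, eb⟩
            refine ⟨hZsup a b ha hb, ?_⟩
            rw [h1 ⟨a, ha⟩ ⟨b, hb⟩ (hZsup a b ha hb), h2 ⟨a, ha⟩ ⟨b, hb⟩ (hZsup a b ha hb),
              ea, eb]
        -- density argument
        set s : Set ↥Z := Subtype.val ⁻¹' (L : Set A.carrier) with hs
        have hclos : closure s = Set.univ := by
          have hemb : Topology.IsEmbedding (Subtype.val : ↥Z → A.carrier) :=
            Topology.IsEmbedding.subtypeVal
          rw [hemb.closure_eq_preimage_closure_image s]
          have himg : Subtype.val '' s = (L : Set A.carrier) := by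
            rw [hs, Set.image_preimage_eq_inter_range, Subtype.range_coe]
            exact Set.inter_eq_self_of_subset_left (by exact_mod_cast hLZ)
          rw [himg, ← hZcoe]
          ext z
          simp only [Set.mem_preimage, Set.mem_univ, iff_true]
          exact z.2
        have hsub : s ⊆ {z : ↥Z | y₁ z = y₂ z} := by
          intro z hz
          obtain ⟨hm, e⟩ := hLW hz
          have : (⟨(z : A.carrier), hm⟩ : ↥Z) = z := Subtype.ext rfl
          rw [this] at e
          exact e
        have hcl2 : IsClosed {z : ↥Z | y₁ z = y₂ z} :=
          isClosed_eq y₁.continuous y₂.continuous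
        ext z
        have : z ∈ closure s := by rw [hclos]; trivial
        exact hcl2.closure_subset (closure_mono hsub |>.trans (by rw [hcl2.closure_eq]) this)
      by_cases hT : T = 0
      · refine ⟨0, ⟨?_, ?_, ?_⟩, ?_⟩
        · intro f g h; simp
        · intro x hx; rw [hT]; rfl
        · rw [hT]
          exact ContinuousLinearMap.opNorm_zero.trans ContinuousLinearMap.opNorm_zero.symm
        · rintro y ⟨hy1, hy2, -⟩
          refine key y 0 hy1 (by intro f g h; simp) ?_
          intro x hx
          rw [hy2 x hx, hT]
          rfl
      · have hc : 0 < ‖T‖ := by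
          rcases lt_or_eq_of_le (norm_nonneg T) with h | h
          · exact h
          · exact absurd ((ContinuousLinearMap.opNorm_zero_iff T).mp h.symm) hT
        set c := ‖T‖ with hcdef
        set T' : E →L[ℝ] X.carrier := c⁻¹ • T with hT'
        have hT'norm : ‖T'‖ = 1 := by
          have h := norm_smul (c⁻¹) T
          rw [hT', h, norm_inv, Real.norm_eq_abs, abs_of_pos hc, ← hcdef,
            inv_mul_cancel₀ hc.ne']
        obtain ⟨S, ⟨hSlat, hSη, hSnorm⟩, -⟩ := hfree (zeroFAlg X.carrier) T' hT'norm.le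
        set That : ↥Z →L[ℝ] X.carrier := c • (S.comp Z.subtypeL) with hThat
        have hThatval : ∀ z : ↥Z, That z = c • S (z : A.carrier) := fun _ => rfl
        have prop1 : ∀ (f g : ↥Z) (h : (↑f ⊔ ↑g : A.carrier) ∈ Z),
            That ⟨(↑f ⊔ ↑g : A.carrier), h⟩ = That f ⊔ That g := by
          intro f g h
          rw [hThatval, hThatval, hThatval]
          rw [show S ((⟨(↑f ⊔ ↑g : A.carrier), h⟩ : ↥Z) : A.carrier)
              = S ((f : A.carrier) ⊔ (g : A.carrier)) from rfl]
          rw [hSlat.2, real_smul_sup hc]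
          rfl
        have prop2 : ∀ (x : E) (hx : η x ∈ Z), That ⟨η x, hx⟩ = T x := by
          intro x hx
          rw [hThatval]
          rw [show S ((⟨η x, hx⟩ : ↥Z) : A.carrier) = S (η x) from rfl]
          rw [hSη x, hT']
          show c • (c⁻¹ • T x) = T x
          rw [smul_smul, mul_inv_cancel₀ hc.ne', one_smul]
        have prop3 : ‖That‖ = ‖T‖ := by
          refine le_antisymm ?_ ?_
          · refine That.opNorm_le_bound (norm_nonneg T) fun z => ?_
            rw [hThatval]
            change ‖c • (S (z : A.carrier) : X.carrier)‖ ≤ ‖T‖ * ‖z‖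
            rw [norm_smul, Real.norm_eq_abs, abs_of_pos hc]
            have h1 : ‖S (z : A.carrier)‖ ≤ ‖(z : A.carrier)‖ := by
              have := S.le_opNorm (z : A.carrier)
              rwa [hSnorm.trans hT'norm, one_mul] at this
            have h2 : ‖(z : A.carrier)‖ = ‖z‖ := rfl
            rw [← hcdef]
            calc c * ‖S (z : A.carrier)‖ ≤ c * ‖(z : A.carrier)‖ := by
                  exact mul_le_mul_of_nonneg_left h1 hc.le
              _ = c * ‖z‖ := by rw [h2]
          · refine T.opNorm_le_bound (norm_nonneg That) fun x => ?_
            have h1 : T x = That ⟨η x, hηZ x⟩ := (prop2 x (hηZ x)).symm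
            have h2 : ‖(⟨η x, hηZ x⟩ : ↥Z)‖ = ‖x‖ := by
              show ‖η x‖ = ‖x‖
              exact η.norm_map x
            rw [h1, ← h2]
            exact That.le_opNorm _
        exact ⟨That, ⟨prop1, prop2, prop3⟩, fun y ⟨hy1, hy2, _⟩ =>
          key y That hy1 prop1 fun x hx => by rw [hy2 x hx, prop2 x hx]⟩
    · -- part (ii)
      refine ⟨P, hPsup, ?_, ?_, ?_, hPη'⟩
      · rw [hPnorm', hηL]
      · intro a
        exact hfix (P a) (hrange a)
      · ext a
        constructor
        · rintro ⟨b, rfl⟩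
          exact hrange b
        · intro ha
          exact ⟨a, hfix a ha⟩

end main
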